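/- Let Φ be a transversally symplectic formal diffeomorphism of ℂ[[x,y₁,y₂]], let X be a transversally Hamiltonian singular formal vector field, and let Z be a singular formal vector field such that Φ conjugates X to Z, i.e. Φ*(Z(f)) = X(Φ*(f)) for all f. Then Z is transversally Hamiltonian. -/

import Mathlib

open MvPowerSeries

noncomputable section

/-- `R3` is the ring `ℂ[[x, y₁, y₂]]` of formal power series in three variables, where
variable `0` plays the role of `x`, variable `1` of `y₁` and variable `2` of `y₂`. -/
abbrev R3 : Type := MvPowerSeries (Fin 3) ℂ

/-- Build a formal power series from its coefficient function. -/
def mk3 (g : (Fin 3 →₀ ℕ) → ℂ) : R3 := g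

/-- Coefficient of the monomial with exponents `m` in `f`. -/
def cf (m : Fin 3 →₀ ℕ) (f : R3) : ℂ := MvPowerSeries.coeff m f

/-- The exponent vector of the monomial `x^{k₀} y₁^{k₁} y₂^{k₂}`. -/
def e (k₀ k₁ k₂ : ℕ) : Fin 3 →₀ ℕ :=
  Finsupp.single 0 k₀ + Finsupp.single 1 k₁ + Finsupp.single 2 k₂

/-- Formal partial derivative with respect to the `i`-th variable. -/
def pd (i : Fin 3) (f : R3) : R3 :=
  mk3 fun m => ((m i : ℂ) + 1) * cf (m + Finsupp.single i 1) f

/-- The formal vector field (derivation) `b 0 · ∂/∂x + b 1 · ∂/∂y₁ + b 2 · ∂/∂y₂`. -/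
def VF (b : Fin 3 → R3) (f : R3) : R3 := ∑ i : Fin 3, b i * pd i f

/-- The maximal ideal `𝔪` of `ℂ[[x,y₁,y₂]]` (series with zero constant term). -/
def mI : Ideal R3 := RingHom.ker (MvPowerSeries.constantCoeff (σ := Fin 3) (R := ℂ))

/-- The variables, as power series. -/
def Xv (i : Fin 3) : R3 := MvPowerSeries.X i

/-- Constant power series. -/
def Cc (a : ℂ) : R3 := MvPowerSeries.C (σ := Fin 3) (R := ℂ) a

/-- The matrix of linear coefficients of a triple of power series. -/
def linM (φ : Fin 3 → R3) : Matrix (Fin 3) (Fin 3) ℂ :=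
  Matrix.of fun i j => cf (Finsupp.single j 1) (φ i)

/-- `φ` is a formal diffeomorphism: a triple in `𝔪³` with invertible linear part. -/
def IsDiffeo (φ : Fin 3 → R3) : Prop :=
  (∀ i, (MvPowerSeries.constantCoeff (σ := Fin 3) (R := ℂ)) (φ i) = 0) ∧ IsUnit (linM φ).det

/-- `φ` is fibered: its first component is the variable `x`. -/
def IsFibered (φ : Fin 3 → R3) : Prop := φ 0 = Xv 0

/-- Pullback (substitution) action: `pb φ f = f(φ 0, φ 1, φ 2)`, written coefficientwise
(the sum below has only finitely many nonzero terms when each `φ i` has zero constant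
term, which is the case for formal diffeomorphisms). -/
def pb (φ : Fin 3 → R3) (f : R3) : R3 :=
  mk3 fun k => ∑' m : Fin 3 →₀ ℕ, cf m f * cf k (∏ i : Fin 3, φ i ^ (m i))

/-- `Φ` conjugates `Y` to `Z` (that is, `Z = Φ_*(Y)`): `Φ*(Z(f)) = Y(Φ*(f))` for all `f`. -/
def Conj (φ Y Z : Fin 3 → R3) : Prop :=
  ∀ f : R3, pb φ (VF Z f) = VF Y (pb φ f)

/-- The power series `c(y₁ y₂)` obtained from a one-variable series `c` by substituting
`v = y₁ y₂`. -/
def csub (c : PowerSeries ℂ) : R3 :=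
  mk3 fun m => if m 0 = 0 ∧ m 1 = m 2 then PowerSeries.coeff (m 1) c else 0

/-- Components of the normal form
`x²∂/∂x + (−λ + a₁x + c₁(y₁y₂))y₁∂/∂y₁ + (λ + a₂x + c₂(y₁y₂))y₂∂/∂y₂`. -/
def NF (l a₁ a₂ : ℂ) (c₁ c₂ : PowerSeries ℂ) : Fin 3 → R3 :=
  ![Xv 0 ^ 2,
    (Cc (-l) + Cc a₁ * Xv 0 + csub c₁) * Xv 1,
    (Cc l + Cc a₂ * Xv 0 + csub c₂) * Xv 2]

/-- Components of a doubly-resonant saddle-node in prepared form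
`x²∂/∂x + (−λy₁ + F₁)∂/∂y₁ + (λy₂ + F₂)∂/∂y₂`. -/
def SN (l : ℂ) (F₁ F₂ : R3) : Fin 3 → R3 :=
  ![Xv 0 ^ 2, Cc (-l) * Xv 1 + F₁, Cc l * Xv 2 + F₂]

/-- The residue of the prepared saddle-node with nonlinear parts `F₁, F₂`: the coefficient
of `x y₁` in `F₁` plus the coefficient of `x y₂` in `F₂`. -/
def resid (F₁ F₂ : R3) : ℂ := cf (e 1 1 0) F₁ + cf (e 1 0 1) F₂

/-- `z` is not a nonpositive rational number. -/
def NotQle0 (z : ℂ) : Prop := ∀ q : ℚ, q ≤ 0 → z ≠ (q : ℂ)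

/-- `φ` is transversally symplectic (with respect to `ω = dy₁∧dy₂/x` and `dx`):
it is fibered and `(∂φ₁/∂y₁)(∂φ₂/∂y₂) − (∂φ₁/∂y₂)(∂φ₂/∂y₁) = 1`. -/
def TransSymp (φ : Fin 3 → R3) : Prop :=
  φ 0 = Xv 0 ∧ pd 1 (φ 1) * pd 2 (φ 2) - pd 2 (φ 1) * pd 1 (φ 2) = 1

/-- `b` depends only on the variable `x`. -/
def OnlyX (b : R3) : Prop := ∀ m : Fin 3 →₀ ℕ, (m 1 ≠ 0 ∨ m 2 ≠ 0) → cf m b = 0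

/-- The vector field with components `b` is transversally Hamiltonian (w.r.t.
`ω = dy₁∧dy₂/x` and `dx`): `b 0 ∈ x·ℂ[[x]]` and `x·(∂b₁/∂y₁ + ∂b₂/∂y₂) = b 0`. -/
def TransHam (b : Fin 3 → R3) : Prop :=
  OnlyX (b 0) ∧ (MvPowerSeries.constantCoeff (σ := Fin 3) (R := ℂ)) (b 0) = 0 ∧
    Xv 0 * (pd 1 (b 1) + pd 2 (b 2)) = b 0



namespace PfAux

/-- total degree of an exponent -/
def Dg (m : Fin 3 →₀ ℕ) : ℕ := ∑ i, m i

lemma Dg_add (p q : Fin 3 →₀ ℕ) : Dg (p + q) = Dg p + Dg q := by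
  simp [Dg, Finsupp.add_apply, Finset.sum_add_distrib]

lemma Dg_eq_zero {m : Fin 3 →₀ ℕ} (h : Dg m = 0) : m = 0 := by
  have h' := (Finset.sum_eq_zero_iff).mp h
  ext i; exact h' i (Finset.mem_univ i)

lemma apply_le_Dg (m : Fin 3 →₀ ℕ) (i : Fin 3) : m i ≤ Dg m :=
  Finset.single_le_sum (fun j _ => Nat.zero_le (m j)) (Finset.mem_univ i)

lemma Dg_single (i : Fin 3) (n : ℕ) : Dg (Finsupp.single i n) = n := by
  fin_cases i <;> simp [Dg, Fin.sum_univ_three, Finsupp.single_apply]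

lemma cf_mk3 (g : (Fin 3 →₀ ℕ) → ℂ) (m : Fin 3 →₀ ℕ) : cf m (mk3 g) = g m := rfl

lemma cf_def (m : Fin 3 →₀ ℕ) (f : R3) : cf m f = MvPowerSeries.coeff m f := rfl

lemma ext3 {f g : R3} (h : ∀ m, cf m f = cf m g) : f = g := MvPowerSeries.ext h

/-- `f` has order at least `n`. -/
def OG (n : ℕ) (f : R3) : Prop := ∀ k, Dg k < n → cf k f = 0

lemma OG_zero (n : ℕ) : OG n (0 : R3) := fun k _ => map_zero _

lemma OG_any (f : R3) : OG 0 f := fun _ h => absurd h (Nat.not_lt_zero _)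

lemma OG_mono {a b : ℕ} (h : b ≤ a) {f : R3} (hf : OG a f) : OG b f :=
  fun k hk => hf k (lt_of_lt_of_le hk h)

lemma OG_add {a : ℕ} {f g : R3} (hf : OG a f) (hg : OG a g) : OG a (f + g) := by
  intro k hk
  have h1 := hf k hk; have h2 := hg k hk
  rw [cf_def] at h1 h2 ⊢
  rw [map_add, h1, h2, add_zero]

lemma OG_neg {a : ℕ} {f : R3} (hf : OG a f) : OG a (-f) := by
  intro k hk
  have h1 := hf k hk
  rw [cf_def] at h1 ⊢
  rw [map_neg, h1, neg_zero]

lemma OG_sub {a : ℕ} {f g : R3} (hf : OG a f) (hg : OG a g) : OG a (f - g) := by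
  rw [sub_eq_add_neg]; exact OG_add hf (OG_neg hg)

lemma OG_mul {a b : ℕ} {f g : R3} (hf : OG a f) (hg : OG b g) : OG (a + b) (f * g) := by
  intro k hk
  rw [cf_def, MvPowerSeries.coeff_mul]
  apply Finset.sum_eq_zero
  intro p hp
  rw [Finset.HasAntidiagonal.mem_antidiagonal] at hp
  have hd : Dg p.1 + Dg p.2 < a + b := by rw [← Dg_add, hp]; exact hk
  rcases lt_or_ge (Dg p.1) a with h1 | h1
  · rw [show MvPowerSeries.coeff p.1 f = 0 from hf p.1 h1, zero_mul]
  · have h2 : Dg p.2 < b := by omega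
    rw [show MvPowerSeries.coeff p.2 g = 0 from hg p.2 h2, mul_zero]

lemma OG_sub_cf {N : ℕ} {u v : R3} (h : OG N (u - v)) {k : Fin 3 →₀ ℕ} (hk : Dg k < N) :
    cf k u = cf k v := by
  have := h k hk
  rw [cf_def, map_sub, sub_eq_zero] at this
  exact this

lemma OG_one_of_const {f : R3} (h : MvPowerSeries.constantCoeff (σ := Fin 3) (R := ℂ) f = 0) :
    OG 1 f := by
  intro k hk
  have : k = 0 := Dg_eq_zero (by omega)
  rw [this, cf_def, MvPowerSeries.coeff_zero_eq_constantCoeff]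
  exact h

lemma OG_pow {f : R3} (hf : OG 1 f) (n : ℕ) : OG n (f ^ n) := by
  induction n with
  | zero => exact OG_any _
  | succ n ih => rw [pow_succ]; exact OG_mul ih hf

end PfAux
namespace PfAux

lemma cf_add (m : Fin 3 →₀ ℕ) (f g : R3) : cf m (f + g) = cf m f + cf m g :=
  map_add (MvPowerSeries.coeff m) f g

lemma cf_neg (m : Fin 3 →₀ ℕ) (f : R3) : cf m (-f) = -(cf m f) :=
  map_neg (MvPowerSeries.coeff m) f

lemma cf_C_mul (m : Fin 3 →₀ ℕ) (a : ℂ) (f : R3) :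
    cf m (MvPowerSeries.C (σ := Fin 3) (R := ℂ) a * f) = a * cf m f :=
  MvPowerSeries.coeff_C_mul m f a

lemma coe_sum3 {α : Type} (s : Finset α) (F : α → MvPolynomial (Fin 3) ℂ) :
    ((∑ x ∈ s, F x : MvPolynomial (Fin 3) ℂ) : R3) = ∑ x ∈ s, ((F x : MvPolynomial (Fin 3) ℂ) : R3) := by
  rw [← MvPolynomial.coeToMvPowerSeries.ringHom_apply, map_sum]
  simp [MvPolynomial.coeToMvPowerSeries.ringHom_apply]

/-- the product `∏ φᵢ^{mᵢ}` -/
def cP (φ : Fin 3 → R3) (m : Fin 3 →₀ ℕ) : R3 := ∏ i : Fin 3, φ i ^ (m i)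

/-- constant bound exponent -/
def bnd (N : ℕ) : Fin 3 →₀ ℕ := Finsupp.equivFunOnFinite.symm (fun _ => N)

lemma bnd_apply (N : ℕ) (i : Fin 3) : bnd N i = N := rfl

/-- polynomial truncation splitting -/
lemma split (N : ℕ) (f : R3) : ∃ p : MvPolynomial (Fin 3) ℂ, OG N (f - ↑p) := by
  rcases Nat.eq_zero_or_pos N with hN | hN
  · exact ⟨0, by rw [hN]; exact OG_any _⟩
  refine ⟨MvPowerSeries.trunc ℂ (bnd N) f, ?_⟩
  intro k hk
  have hle : k ≤ bnd N := by
    rw [Finsupp.le_def]; intro i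
    calc k i ≤ Dg k := apply_le_Dg k i
    _ ≤ N := by omega
  have hne : k ≠ bnd N := by
    intro hc
    have : Dg k = 3 * N := by
      rw [hc, Dg, Fin.sum_univ_three, bnd_apply, bnd_apply, bnd_apply]; ring
    omega
  have hlt : k < bnd N := lt_of_le_of_ne hle hne
  rw [cf_def, map_sub, MvPolynomial.coeff_coe, MvPowerSeries.coeff_trunc, if_pos hlt,
    sub_self]

section Phi
variable {φ : Fin 3 → R3} (h0 : ∀ i, MvPowerSeries.constantCoeff (σ := Fin 3) (R := ℂ) (φ i) = 0)
include h0

lemma OG_cP (m : Fin 3 →₀ ℕ) : OG (Dg m) (cP φ m) := by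
  have h1 : ∀ i, OG (m i) (φ i ^ (m i)) := fun i => OG_pow (OG_one_of_const (h0 i)) (m i)
  have h2 : Dg m = m 0 + m 1 + m 2 := Fin.sum_univ_three m
  rw [h2, cP, Fin.prod_univ_three]
  exact OG_mul (OG_mul (h1 0) (h1 1)) (h1 2)

lemma cP_cf_zero {k m : Fin 3 →₀ ℕ} (h : Dg k < Dg m) : cf k (cP φ m) = 0 :=
  OG_cP h0 m k h

lemma pb_vanish (f : R3) (k : Fin 3 →₀ ℕ) :
    ∀ m ∉ Finset.Iic (bnd (Dg k)), cf m f * cf k (cP φ m) = 0 := by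
  intro m hm
  have hlt : Dg k < Dg m := by
    by_contra hc
    apply hm
    rw [Finset.mem_Iic, Finsupp.le_def]
    intro i
    calc m i ≤ Dg m := apply_le_Dg m i
    _ ≤ Dg k := by omega
  rw [cP_cf_zero h0 hlt, mul_zero]

lemma cf_pb (f : R3) (k : Fin 3 →₀ ℕ) :
    cf k (pb φ f) = ∑ m ∈ Finset.Iic (bnd (Dg k)), cf m f * cf k (cP φ m) := by
  have h : cf k (pb φ f) = ∑' m, cf m f * cf k (cP φ m) := rfl
  rw [h, tsum_eq_sum (pb_vanish h0 f k)]

lemma pb_add (f g : R3) : pb φ (f + g) = pb φ f + pb φ g := by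
  apply ext3; intro k
  rw [cf_add, cf_pb h0, cf_pb h0, cf_pb h0, ← Finset.sum_add_distrib]
  apply Finset.sum_congr rfl
  intro m _
  rw [cf_add, add_mul]

lemma pb_zero : pb φ (0 : R3) = 0 := by
  apply ext3; intro k
  rw [cf_pb h0]
  simp [cf_def]

lemma pb_neg (f : R3) : pb φ (-f) = -(pb φ f) := by
  apply ext3; intro k
  rw [cf_neg, cf_pb h0, cf_pb h0, ← Finset.sum_neg_distrib]
  apply Finset.sum_congr rfl
  intro m _
  rw [cf_neg, neg_mul]

lemma pb_sub (f g : R3) : pb φ (f - g) = pb φ f - pb φ g := by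
  rw [sub_eq_add_neg, pb_add h0, pb_neg h0, sub_eq_add_neg]

lemma pb_sum {α : Type} (s : Finset α) (F : α → R3) :
    pb φ (∑ x ∈ s, F x) = ∑ x ∈ s, pb φ (F x) := by
  classical
  induction s using Finset.induction_on with
  | empty => simpa using pb_zero h0
  | insert _ _ hx ih => rw [Finset.sum_insert hx, Finset.sum_insert hx, pb_add h0, ih]

lemma pb_monomial (m : Fin 3 →₀ ℕ) (a : ℂ) :
    pb φ (MvPowerSeries.monomial m a) = MvPowerSeries.C (σ := Fin 3) (R := ℂ) a * cP φ m := by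
  apply ext3; intro k
  have h : cf k (pb φ (MvPowerSeries.monomial m a)) =
      ∑' m', cf m' (MvPowerSeries.monomial m a) * cf k (cP φ m') := rfl
  rw [h, tsum_eq_single m ?van, cf_C_mul]
  case van =>
    intro m' hm'
    rw [cf_def, MvPowerSeries.coeff_monomial, if_neg hm', zero_mul]
  rw [cf_def, MvPowerSeries.coeff_monomial, if_pos rfl]

lemma OG_pb {N : ℕ} {f : R3} (hf : OG N f) : OG N (pb φ f) := by
  intro k hk
  rw [cf_pb h0]
  apply Finset.sum_eq_zero
  intro m _
  rcases lt_or_ge (Dg m) N with h1 | h1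
  · rw [hf m h1, zero_mul]
  · rw [cP_cf_zero h0 (show Dg k < Dg m by omega), mul_zero]

lemma pb_coe (p : MvPolynomial (Fin 3) ℂ) :
    pb φ (↑p : R3) = MvPolynomial.aeval φ p := by
  conv_lhs => rw [p.as_sum]
  rw [coe_sum3, pb_sum h0]
  conv_rhs => rw [p.as_sum]
  rw [map_sum]
  apply Finset.sum_congr rfl
  intro m _
  rw [MvPolynomial.coe_monomial, pb_monomial h0, MvPolynomial.aeval_monomial,
    Finsupp.prod_pow]
  rfl

lemma pb_one : pb φ (1 : R3) = 1 := by
  have h := pb_coe h0 (1 : MvPolynomial (Fin 3) ℂ)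
  simpa using h

lemma pb_C (a : ℂ) : pb φ (Cc a) = Cc a := by
  have h := pb_coe h0 (MvPolynomial.C a : MvPolynomial (Fin 3) ℂ)
  rw [MvPolynomial.coe_C] at h
  rw [Cc, h, MvPolynomial.aeval_C]
  rfl

lemma pb_X (i : Fin 3) : pb φ (Xv i) = φ i := by
  have h := pb_coe h0 (MvPolynomial.X i : MvPolynomial (Fin 3) ℂ)
  rw [MvPolynomial.coe_X] at h
  rw [Xv, h, MvPolynomial.aeval_X]

lemma pb_mul (f g : R3) : pb φ (f * g) = pb φ f * pb φ g := by
  apply ext3; intro k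
  set N := Dg k + 1 with hN
  obtain ⟨P, hP⟩ := split N f
  obtain ⟨Q, hQ⟩ := split N g
  have hdk : Dg k < N := by omega
  have h1 : cf k (pb φ (f * g)) = cf k (pb φ ((P : R3) * (Q : R3))) := by
    apply OG_sub_cf (N := N) _ hdk
    rw [← pb_sub h0]
    apply OG_pb h0
    have he : f * g - (P : R3) * (Q : R3) = (f - ↑P) * g + (↑P : R3) * (g - ↑Q) := by ring
    rw [he]
    exact OG_add (by simpa using OG_mul hP (OG_any g))
      (by simpa using OG_mul (OG_any (↑P : R3)) hQ)
  have h2 : pb φ ((P : R3) * (Q : R3)) = pb φ (↑P : R3) * pb φ (↑Q : R3) := by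
    rw [← MvPolynomial.coe_mul, pb_coe h0, pb_coe h0, pb_coe h0, map_mul]
  have h3 : cf k (pb φ f * pb φ g) = cf k (pb φ (↑P : R3) * pb φ (↑Q : R3)) := by
    apply OG_sub_cf (N := N) _ hdk
    have he : pb φ f * pb φ g - pb φ (↑P : R3) * pb φ (↑Q : R3) =
        (pb φ f - pb φ (↑P : R3)) * pb φ g + pb φ (↑P : R3) * (pb φ g - pb φ (↑Q : R3)) := by
      ring
    rw [he, ← pb_sub h0, ← pb_sub h0]
    exact OG_add (by simpa using OG_mul (OG_pb h0 hP) (OG_any _))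
      (by simpa using OG_mul (OG_any _) (OG_pb h0 hQ))
  rw [h1, h2, ← h3]

end Phi
end PfAux
namespace PfAux

lemma cf_pd (i : Fin 3) (m : Fin 3 →₀ ℕ) (f : R3) :
    cf m (pd i f) = ((m i : ℂ) + 1) * cf (m + Finsupp.single i 1) f := rfl

lemma pd_add (i : Fin 3) (f g : R3) : pd i (f + g) = pd i f + pd i g := by
  apply ext3; intro m
  rw [cf_add, cf_pd, cf_pd, cf_pd, cf_add]
  ring

lemma pd_sum (i : Fin 3) {α : Type} (s : Finset α) (F : α → R3) :
    pd i (∑ x ∈ s, F x) = ∑ x ∈ s, pd i (F x) := by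
  classical
  induction s using Finset.induction_on with
  | empty =>
    apply ext3; intro m
    rw [Finset.sum_empty, Finset.sum_empty, cf_pd]
    simp [cf_def]
  | insert _ _ hx ih => rw [Finset.sum_insert hx, Finset.sum_insert hx, pd_add, ih]

lemma cf_sub (m : Fin 3 →₀ ℕ) (f g : R3) : cf m (f - g) = cf m f - cf m g :=
  map_sub (MvPowerSeries.coeff m) f g

lemma pd_sub (i : Fin 3) (f g : R3) : pd i (f - g) = pd i f - pd i g := by
  apply ext3; intro m
  rw [cf_sub, cf_pd, cf_pd, cf_pd, cf_sub]
  ring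

lemma pd_C (i : Fin 3) (a : ℂ) : pd i (Cc a) = 0 := by
  apply ext3; intro m
  rw [cf_pd]
  have h : m + Finsupp.single i 1 ≠ 0 := by
    intro hc
    have := DFunLike.congr_fun hc i
    simp [Finsupp.single_apply] at this
  rw [Cc, cf_def, MvPowerSeries.coeff_C, if_neg h]
  simp [cf_def]

lemma pd_one (i : Fin 3) : pd i (1 : R3) = 0 := by
  have h : (1 : R3) = Cc 1 := by rw [Cc, map_one]
  rw [h, pd_C]

lemma pd_X (i j : Fin 3) : pd i (Xv j) = if i = j then 1 else 0 := by
  apply ext3; intro m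
  rw [cf_pd, Xv, cf_def, MvPowerSeries.coeff_X]
  rcases eq_or_ne i j with hij | hij
  · subst hij
    rcases eq_or_ne m 0 with hm | hm
    · subst hm
      rw [if_pos (by simp), if_pos rfl]
      simp [cf_def, MvPowerSeries.coeff_one]
    · rw [if_neg, if_pos rfl]
      · rw [cf_def, MvPowerSeries.coeff_one, if_neg hm, mul_zero]
      · intro hc
        apply hm
        ext j
        have := DFunLike.congr_fun hc j
        simp only [Finsupp.add_apply, Finsupp.single_apply] at this ⊢
        by_cases h : i = j <;> simp [h] at this ⊢ <;> omega
  · rw [if_neg, if_neg hij]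
    · simp [cf_def]
    · intro hc
      have := DFunLike.congr_fun hc i
      simp [Finsupp.single_apply, Ne.symm hij] at this
lemma OG_pd {N : ℕ} {f : R3} (hf : OG (N + 1) f) (i : Fin 3) : OG N (pd i f) := by
  intro m hm
  rw [cf_pd, hf, mul_zero]
  rw [Dg_add, Dg_single]
  omega

lemma pd_monomial (i : Fin 3) (m : Fin 3 →₀ ℕ) (a : ℂ) :
    pd i (MvPowerSeries.monomial m a) =
      MvPowerSeries.monomial (m - Finsupp.single i 1) ((m i : ℂ) * a) := by
  apply ext3; intro k
  rw [cf_pd, cf_def, cf_def, MvPowerSeries.coeff_monomial, MvPowerSeries.coeff_monomial]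
  by_cases h : k + Finsupp.single i 1 = m
  · have hmi : m i = k i + 1 := by
      rw [← h]; simp [Finsupp.single_apply]
    have hk : k = m - Finsupp.single i 1 := by
      rw [← h]; ext j
      simp only [Finsupp.tsub_apply, Finsupp.add_apply, Finsupp.single_apply]
      omega
    rw [if_pos h, if_pos hk, hmi]
    push_cast
    ring
  · rw [if_neg h, mul_zero]
    by_cases hmi : m i = 0
    · by_cases hk : k = m - Finsupp.single i 1
      · rw [if_pos hk, hmi]
        norm_num
      · rw [if_neg hk]
    · have hk : k ≠ m - Finsupp.single i 1 := by
        intro hc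
        apply h
        ext j
        have := DFunLike.congr_fun hc j
        simp only [Finsupp.tsub_apply, Finsupp.single_apply, Finsupp.add_apply] at this ⊢
        by_cases hij : i = j
        · subst hij; simp at this ⊢; omega
        · simp [hij] at this ⊢; omega
      rw [if_neg hk]

lemma pd_coe (i : Fin 3) (p : MvPolynomial (Fin 3) ℂ) :
    pd i (↑p : R3) = ((MvPolynomial.pderiv i p : MvPolynomial (Fin 3) ℂ) : R3) := by
  conv_lhs => rw [p.as_sum]
  conv_rhs => rw [p.as_sum]
  rw [coe_sum3, pd_sum, map_sum, coe_sum3]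
  apply Finset.sum_congr rfl
  intro m _
  rw [MvPolynomial.coe_monomial, pd_monomial, MvPolynomial.pderiv_monomial,
    MvPolynomial.coe_monomial]
  congr 1
  push_cast
  ring

lemma pd_mul (i : Fin 3) (f g : R3) : pd i (f * g) = pd i f * g + f * pd i g := by
  apply ext3; intro k
  set M := Dg k + 1 with hM
  obtain ⟨P, hP⟩ := split (M + 1) f
  obtain ⟨Q, hQ⟩ := split (M + 1) g
  have hdk1 : Dg k < M := by omega
  have h1 : cf k (pd i (f * g)) = cf k (pd i ((P : R3) * (Q : R3))) := by
    apply OG_sub_cf (N := M) _ hdk1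
    rw [← pd_sub]
    apply OG_pd (N := M)
    have he : f * g - (P : R3) * (Q : R3) = (f - ↑P) * g + (↑P : R3) * (g - ↑Q) := by ring
    rw [he]
    exact OG_add (by simpa using OG_mul hP (OG_any g))
      (by simpa using OG_mul (OG_any (↑P : R3)) hQ)
  have h2 : pd i ((P : R3) * (Q : R3)) = pd i (↑P : R3) * ↑Q + (↑P : R3) * pd i (↑Q : R3) := by
    rw [← MvPolynomial.coe_mul, pd_coe, MvPolynomial.pderiv_mul, pd_coe, pd_coe]
    push_cast [MvPolynomial.coe_add, MvPolynomial.coe_mul]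
    rfl
  have h3 : cf k (pd i f * g + f * pd i g) =
      cf k (pd i (↑P : R3) * ↑Q + (↑P : R3) * pd i (↑Q : R3)) := by
    apply OG_sub_cf (N := M) _ hdk1
    have he : pd i f * g + f * pd i g - (pd i (↑P : R3) * ↑Q + (↑P : R3) * pd i (↑Q : R3)) =
        (pd i f - pd i (↑P : R3)) * g + pd i (↑P : R3) * (g - ↑Q)
          + ((f - ↑P) * pd i g + (↑P : R3) * (pd i g - pd i (↑Q : R3))) := by ring
    rw [he, ← pd_sub, ← pd_sub]
    apply OG_add
    · apply OG_add
      · exact (by simpa using OG_mul (OG_pd (N := M) hP i) (OG_any g))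
      · exact OG_mono (a := M + 1) (Nat.le_succ M) (by simpa using OG_mul (OG_any (pd i (↑P : R3))) hQ)
    · apply OG_add
      · exact OG_mono (a := M + 1) (Nat.le_succ M) (by simpa using OG_mul hP (OG_any (pd i g)))
      · exact (by simpa using OG_mul (OG_any (↑P : R3)) (OG_pd (N := M) hQ i))
  rw [h1, h2, ← h3]

lemma pd_comm (i j : Fin 3) (f : R3) : pd i (pd j f) = pd j (pd i f) := by
  apply ext3; intro m
  rw [cf_pd, cf_pd, cf_pd, cf_pd]
  have hidx : m + Finsupp.single i 1 + Finsupp.single j 1 =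
      m + Finsupp.single j 1 + Finsupp.single i 1 := by
    rw [add_right_comm]
  rw [hidx]
  rcases eq_or_ne i j with hij | hij
  · subst hij; ring
  · simp only [Finsupp.add_apply, Finsupp.single_apply, if_neg hij, if_neg (Ne.symm hij)]
    push_cast
    ring
end PfAux
namespace PfAux
section Phi
variable {φ : Fin 3 → R3} (h0 : ∀ i, MvPowerSeries.constantCoeff (σ := Fin 3) (R := ℂ) (φ i) = 0)
include h0

lemma pb_pd_poly (p : MvPolynomial (Fin 3) ℂ) (i : Fin 3) :
    pd i (pb φ (↑p : R3)) = ∑ j : Fin 3, pb φ (pd j (↑p : R3)) * pd i (φ j) := by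
  induction p using MvPolynomial.induction_on with
  | C a =>
    rw [MvPolynomial.coe_C]
    have hC : (MvPowerSeries.C (σ := Fin 3) (R := ℂ) a : R3) = Cc a := rfl
    rw [hC, pb_C h0, pd_C]
    apply Eq.symm
    apply Finset.sum_eq_zero
    intro j _
    rw [pd_C, pb_zero h0, zero_mul]
  | add p q hp hq =>
    rw [MvPolynomial.coe_add, pb_add h0, pd_add, hp, hq, ← Finset.sum_add_distrib]
    apply Finset.sum_congr rfl
    intro j _
    rw [pd_add, pb_add h0, add_mul]
  | mul_X p j hp =>
    rw [MvPolynomial.coe_mul, MvPolynomial.coe_X]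
    have hXv : (MvPowerSeries.X j : R3) = Xv j := rfl
    rw [hXv, pb_mul h0, pb_X h0, pd_mul, hp]
    have hrhs : ∀ j' : Fin 3, pb φ (pd j' ((↑p : R3) * Xv j)) * pd i (φ j') =
        pb φ (pd j' (↑p : R3)) * pd i (φ j') * φ j
          + (if j' = j then pb φ (↑p : R3) * pd i (φ j') else 0) := by
      intro j'
      rw [pd_mul, pd_X, pb_add h0, pb_mul h0, pb_X h0]
      rcases eq_or_ne j' j with h | h
      · rw [if_pos h, if_pos h, mul_one]
        try ring
      · rw [if_neg h, if_neg h, mul_zero, pb_zero h0, add_zero, add_zero]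
        try ring
    rw [Finset.sum_congr rfl (fun j' _ => hrhs j'), Finset.sum_add_distrib,
      Finset.sum_ite_eq' Finset.univ j (fun j' => pb φ (↑p : R3) * pd i (φ j')),
      if_pos (Finset.mem_univ j), ← Finset.sum_mul]
    try ring

lemma pb_pd (f : R3) (i : Fin 3) :
    pd i (pb φ f) = ∑ j : Fin 3, pb φ (pd j f) * pd i (φ j) := by
  apply ext3; intro k
  set M := Dg k + 1 with hM
  obtain ⟨P, hP⟩ := split (M + 1) f
  have hdk : Dg k < M := by omega
  have h1 : cf k (pd i (pb φ f)) = cf k (pd i (pb φ (↑P : R3))) := by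
    apply OG_sub_cf (N := M) _ hdk
    rw [← pd_sub, ← pb_sub h0]
    exact OG_pd (OG_pb h0 hP) i
  have h3 : cf k (∑ j : Fin 3, pb φ (pd j f) * pd i (φ j)) =
      cf k (∑ j : Fin 3, pb φ (pd j (↑P : R3)) * pd i (φ j)) := by
    apply OG_sub_cf (N := M) _ hdk
    have he : (∑ j : Fin 3, pb φ (pd j f) * pd i (φ j))
        - (∑ j : Fin 3, pb φ (pd j (↑P : R3)) * pd i (φ j))
        = ∑ j : Fin 3, (pb φ (pd j f) - pb φ (pd j (↑P : R3))) * pd i (φ j) := by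
      rw [← Finset.sum_sub_distrib]
      apply Finset.sum_congr rfl
      intro j _
      ring
    rw [he]
    have hterm : ∀ j : Fin 3, OG M ((pb φ (pd j f) - pb φ (pd j (↑P : R3))) * pd i (φ j)) := by
      intro j
      have : OG M (pb φ (pd j f) - pb φ (pd j (↑P : R3))) := by
        rw [← pb_sub h0, ← pd_sub]
        exact OG_pb h0 (OG_pd hP j)
      simpa using OG_mul this (OG_any (pd i (φ j)))
    rw [Fin.sum_univ_three]
    exact OG_add (OG_add (hterm 0) (hterm 1)) (hterm 2)
  rw [h1, h3, pb_pd_poly h0]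

end Phi
end PfAux
namespace PfAux

lemma Dg_eq_degree (k : Fin 3 →₀ ℕ) : k.degree = Dg k :=
  Finset.sum_subset (Finset.subset_univ _)
    (fun i _ hi => Finsupp.notMem_support_iff.mp hi)

/-- linear-form polynomials attached to a matrix -/
def lp (M : Matrix (Fin 3) (Fin 3) ℂ) (i : Fin 3) : MvPolynomial (Fin 3) ℂ :=
  ∑ j : Fin 3, MvPolynomial.monomial (Finsupp.single j 1) (M i j)

lemma lp_homog (M : Matrix (Fin 3) (Fin 3) ℂ) (i : Fin 3) :
    (lp M i).IsHomogeneous 1 := by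
  apply MvPolynomial.IsHomogeneous.sum
  intro j _
  apply MvPolynomial.isHomogeneous_monomial
  rw [Dg_eq_degree, Dg_single]

lemma aeval_lp (M M' : Matrix (Fin 3) (Fin 3) ℂ) (i : Fin 3) :
    MvPolynomial.aeval (lp M') (lp M i) =
      ∑ t : Fin 3, MvPolynomial.monomial (Finsupp.single t 1) ((M * M') i t) := by
  rw [lp, map_sum]
  have h1 : ∀ j : Fin 3, MvPolynomial.aeval (lp M')
      (MvPolynomial.monomial (Finsupp.single j 1) (M i j)) =
      ∑ t : Fin 3, MvPolynomial.monomial (Finsupp.single t 1) (M i j * M' j t) := by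
    intro j
    rw [MvPolynomial.aeval_monomial, Finsupp.prod_single_index (by simp), pow_one]
    have halg : (algebraMap ℂ (MvPolynomial (Fin 3) ℂ)) (M i j) = MvPolynomial.C (M i j) := rfl
    rw [halg, lp, Finset.mul_sum]
    apply Finset.sum_congr rfl
    intro t _
    rw [MvPolynomial.C_mul_monomial]
  rw [Finset.sum_congr rfl (fun j _ => h1 j), Finset.sum_comm]
  apply Finset.sum_congr rfl
  intro t _
  rw [Matrix.mul_apply, ← map_sum (MvPolynomial.monomial (Finsupp.single t 1))]

lemma aeval_lp_one (i : Fin 3) :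
    (∑ t : Fin 3, MvPolynomial.monomial (Finsupp.single t 1)
      ((1 : Matrix (Fin 3) (Fin 3) ℂ) i t)) = MvPolynomial.X i := by
  rw [Finset.sum_eq_single i]
  · rw [Matrix.one_apply_eq, ← MvPolynomial.X_pow_eq_monomial, pow_one]
  · intro t _ hti
    rw [Matrix.one_apply_ne (Ne.symm hti), map_zero]
  · intro h; exact absurd (Finset.mem_univ i) h

lemma aeval_lp_inj {L : Matrix (Fin 3) (Fin 3) ℂ} (hdet : IsUnit L.det)
    {p : MvPolynomial (Fin 3) ℂ} (h : MvPolynomial.aeval (lp L) p = 0) : p = 0 := by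
  have hcomp := MvPolynomial.comp_aeval_apply (lp L) (MvPolynomial.aeval (lp L⁻¹)) p
  rw [h, map_zero] at hcomp
  have hX : (fun i => MvPolynomial.aeval (lp L⁻¹) (lp L i)) = MvPolynomial.X := by
    funext i
    rw [aeval_lp, Matrix.mul_nonsing_inv L hdet, aeval_lp_one]
  rw [hX, MvPolynomial.aeval_X_left_apply] at hcomp
  exact hcomp.symm

lemma Dg_le_one {k : Fin 3 →₀ ℕ} (h : Dg k ≤ 1) :
    k = 0 ∨ ∃ j, k = Finsupp.single j 1 := by
  have h3 : k 0 + k 1 + k 2 ≤ 1 := by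
    have := Fin.sum_univ_three k; rw [Dg] at h; omega
  by_cases h0 : k 0 = 1
  · right; exact ⟨0, by ext j; fin_cases j <;> simp [Finsupp.single_apply] <;> omega⟩
  · by_cases h1 : k 1 = 1
    · right; exact ⟨1, by ext j; fin_cases j <;> simp [Finsupp.single_apply] <;> omega⟩
    · by_cases h2 : k 2 = 1
      · right; exact ⟨2, by ext j; fin_cases j <;> simp [Finsupp.single_apply] <;> omega⟩
      · left; ext j; fin_cases j <;> simp <;> omega

/-- closeness of two series up to higher order is preserved by products -/
lemma OG_close_mul {a b : ℕ} {f f' g g' : R3} (hf : OG a f') (hg : OG b g)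
    (hdf : OG (a + 1) (f - f')) (hdg : OG (b + 1) (g - g')) :
    OG (a + b + 1) (f * g - f' * g') := by
  have he : f * g - f' * g' = (f - f') * g + f' * (g - g') := by ring
  rw [he]
  exact OG_add (by simpa [add_right_comm] using OG_mul hdf hg)
    (by simpa [add_assoc] using OG_mul hf hdg)

lemma OG_close_pow {f f' : R3} (hf : OG 1 f) (hf' : OG 1 f') (hd : OG 2 (f - f')) (n : ℕ) :
    OG (n + 1) (f ^ n - f' ^ n) := by
  induction n with
  | zero => simpa using OG_zero 1
  | succ n ih =>
    have h1 : f ^ (n + 1) - f' ^ (n + 1) = f * f ^ n - f' * f' ^ n := by ring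
    rw [h1]
    have := OG_close_mul (a := 1) (b := n) hf' (OG_pow hf n) hd ih
    simpa [add_comm, add_left_comm] using this

section Inj
variable {φ : Fin 3 → R3} (hd : IsDiffeo φ)
include hd

lemma phi_lp_close (i : Fin 3) : OG 2 (φ i - ((lp (linM φ) i : MvPolynomial (Fin 3) ℂ) : R3)) := by
  intro k hk
  rw [cf_sub]
  have hcoe : cf k ((lp (linM φ) i : MvPolynomial (Fin 3) ℂ) : R3) =
      ∑ j : Fin 3, (if Finsupp.single j 1 = k then linM φ i j else 0) := by
    rw [cf_def, MvPolynomial.coeff_coe, lp]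
    rw [MvPolynomial.coeff_sum]
    apply Finset.sum_congr rfl
    intro j _
    rw [MvPolynomial.coeff_monomial]
  rcases Dg_le_one (by omega : Dg k ≤ 1) with h | ⟨j, hj⟩
  · subst h
    rw [hcoe]
    have hz : ∀ j : Fin 3, (if Finsupp.single j 1 = (0 : Fin 3 →₀ ℕ) then linM φ i j else 0) = 0 := by
      intro j
      rw [if_neg]
      intro hc
      have := DFunLike.congr_fun hc j
      simp [Finsupp.single_apply] at this
    rw [Finset.sum_congr rfl (fun j _ => hz j), Finset.sum_const_zero]
    rw [cf_def, MvPowerSeries.coeff_zero_eq_constantCoeff, hd.1 i, sub_zero]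
  · subst hj
    rw [hcoe, Finset.sum_eq_single j]
    · rw [if_pos rfl]
      have : cf (Finsupp.single j 1) (φ i) = linM φ i j := rfl
      rw [this, sub_self]
    · intro t _ htj
      rw [if_neg]
      intro hc
      have := DFunLike.congr_fun hc t
      simp [Finsupp.single_apply, Ne.symm htj] at this
    · intro h; exact absurd (Finset.mem_univ j) h

lemma cP_lp_cf {k m : Fin 3 →₀ ℕ} (hkm : Dg k = Dg m) :
    cf k (cP φ m) = MvPolynomial.coeff k (∏ i : Fin 3, lp (linM φ) i ^ (m i)) := by
  have h0 := hd.1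
  set L := linM φ
  have hog1 : ∀ i, OG 1 ((lp L i : MvPolynomial (Fin 3) ℂ) : R3) := by
    intro i
    intro k' hk'
    have hk0 : k' = 0 := Dg_eq_zero (by omega)
    subst hk0
    rw [cf_def, MvPolynomial.coeff_coe]
    apply (lp_homog L i).coeff_eq_zero
    rw [Dg_eq_degree]
    simp [Dg]
  have hpow : ∀ i, OG (m i + 1) (φ i ^ (m i) - ((lp L i : MvPolynomial (Fin 3) ℂ) : R3) ^ (m i)) :=
    fun i => OG_close_pow (OG_one_of_const (h0 i)) (hog1 i) (phi_lp_close hd i) (m i)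
  have hprod : OG (Dg m + 1) (cP φ m - ∏ i : Fin 3, ((lp L i : MvPolynomial (Fin 3) ℂ) : R3) ^ (m i)) := by
    have h01 := OG_close_mul (a := m 0) (b := m 1)
      (OG_pow (hog1 0) (m 0)) (OG_pow (OG_one_of_const (h0 1)) (m 1)) (hpow 0) (hpow 1)
    have h012 := OG_close_mul (a := m 0 + m 1) (b := m 2)
      (OG_mul (OG_pow (hog1 0) (m 0)) (OG_pow (hog1 1) (m 1)))
      (OG_pow (OG_one_of_const (h0 2)) (m 2)) h01 (hpow 2)
    have hDg : Dg m = m 0 + m 1 + m 2 := Fin.sum_univ_three m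
    rw [cP, Fin.prod_univ_three, Fin.prod_univ_three, hDg]
    exact h012
  have hcoe : (((∏ i : Fin 3, lp L i ^ (m i) : MvPolynomial (Fin 3) ℂ)) : R3) =
      ∏ i : Fin 3, ((lp L i : MvPolynomial (Fin 3) ℂ) : R3) ^ (m i) := by
    rw [← MvPolynomial.coeToMvPowerSeries.ringHom_apply, map_prod]
    apply Finset.prod_congr rfl
    intro i _
    rw [map_pow, MvPolynomial.coeToMvPowerSeries.ringHom_apply]
  have := OG_sub_cf hprod (k := k) (by omega)
  rw [this, ← hcoe, cf_def, MvPolynomial.coeff_coe]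

end Inj
end PfAux
namespace PfAux
section Inj2
variable {φ : Fin 3 → R3} (hd : IsDiffeo φ)
include hd

lemma pb_eq_zero {g : R3} (hg : pb φ g = 0) : g = 0 := by
  classical
  have h0 := hd.1
  by_contra hne
  have hex : ∃ n, ∃ m : Fin 3 →₀ ℕ, Dg m = n ∧ cf m g ≠ 0 := by
    have hem : ∃ m, cf m g ≠ 0 := by
      by_contra hc
      push_neg at hc
      exact hne (ext3 (fun m => by rw [hc m]; simp [cf_def]))
    obtain ⟨m, hm⟩ := hem
    exact ⟨Dg m, m, rfl, hm⟩
  set N := Nat.find hex with hN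
  obtain ⟨m₀, hm₀d, hm₀⟩ := Nat.find_spec hex
  have hmin : ∀ m : Fin 3 →₀ ℕ, Dg m < N → cf m g = 0 := by
    intro m hm
    by_contra hc
    exact Nat.find_min hex hm ⟨m, rfl, hc⟩
  set L := linM φ with hL
  set S := (Finset.Iic (bnd N)).filter (fun m => Dg m = N) with hS
  set p : MvPolynomial (Fin 3) ℂ := ∑ m ∈ S, MvPolynomial.monomial m (cf m g) with hp
  have hmemS : ∀ m : Fin 3 →₀ ℕ, m ∈ S ↔ (m ≤ bnd N ∧ Dg m = N) := by
    intro m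
    rw [hS, Finset.mem_filter, Finset.mem_Iic]
  have hm₀S : m₀ ∈ S := by
    rw [hmemS]
    constructor
    · rw [Finsupp.le_def]
      intro i
      rw [bnd_apply]
      calc m₀ i ≤ Dg m₀ := apply_le_Dg m₀ i
      _ = N := hm₀d
    · exact hm₀d
  have hcoeffp : ∀ m₁ : Fin 3 →₀ ℕ, m₁ ∈ S → MvPolynomial.coeff m₁ p = cf m₁ g := by
    intro m₁ hm₁
    rw [hp, MvPolynomial.coeff_sum, Finset.sum_eq_single m₁]
    · rw [MvPolynomial.coeff_monomial, if_pos rfl]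
    · intro t _ ht
      rw [MvPolynomial.coeff_monomial, if_neg ht]
    · intro h; exact absurd hm₁ h
  have hpne : p ≠ 0 := by
    intro hc
    apply hm₀
    rw [← hcoeffp m₀ hm₀S, hc, MvPolynomial.coeff_zero]
  apply hpne
  apply aeval_lp_inj hd.2
  apply MvPolynomial.ext
  intro k
  rw [MvPolynomial.coeff_zero]
  have hform : MvPolynomial.aeval (lp L) p =
      ∑ m ∈ S, MvPolynomial.C (cf m g) * ∏ i : Fin 3, lp L i ^ (m i) := by
    rw [hp, map_sum]
    apply Finset.sum_congr rfl
    intro m _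
    rw [MvPolynomial.aeval_monomial, Finsupp.prod_pow]
    rfl
  by_cases hdk : Dg k = N
  · rw [hform, MvPolynomial.coeff_sum]
    have hterm : ∀ m ∈ S, MvPolynomial.coeff k (MvPolynomial.C (cf m g)
        * ∏ i : Fin 3, lp L i ^ (m i)) = cf m g * cf k (cP φ m) := by
      intro m hm
      rw [MvPolynomial.coeff_C_mul]
      congr 1
      rw [cP_lp_cf hd (by rw [hdk, ((hmemS m).mp hm).2])]
    rw [Finset.sum_congr rfl hterm]
    have hsub : S ⊆ Finset.Iic (bnd N) := Finset.filter_subset _ _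
    have hext : ∑ m ∈ S, cf m g * cf k (cP φ m)
        = ∑ m ∈ Finset.Iic (bnd N), cf m g * cf k (cP φ m) := by
      apply Finset.sum_subset hsub
      intro m hm hmS
      have hne' : Dg m ≠ N := by
        intro hc
        exact hmS ((hmemS m).mpr ⟨Finset.mem_Iic.mp hm, hc⟩)
      rcases lt_or_gt_of_ne hne' with h | h
      · rw [hmin m h, zero_mul]
      · rw [cP_cf_zero h0 (by omega), mul_zero]
    rw [hext]
    have := cf_pb h0 g k
    rw [hdk] at this
    rw [← this, hg]
    simp [cf_def]
  · have hhom : (MvPolynomial.aeval (lp L) p).IsHomogeneous N := by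
      rw [hform]
      apply MvPolynomial.IsHomogeneous.sum
      intro m hm
      have h1 : (MvPolynomial.C (cf m g) : MvPolynomial (Fin 3) ℂ).IsHomogeneous 0 :=
        MvPolynomial.isHomogeneous_C _ _
      have h2 : (∏ i : Fin 3, lp L i ^ (m i)).IsHomogeneous (Dg m) := by
        have := MvPolynomial.IsHomogeneous.prod Finset.univ
          (fun i => lp L i ^ (m i)) (fun i => m i)
          (fun i _ => by simpa using (lp_homog L i).pow (m i))
        exact this
      have h3 := h1.mul h2
      rw [zero_add, ((hmemS m).mp hm).2] at h3
      exact h3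
    apply hhom.coeff_eq_zero
    rw [Dg_eq_degree]
    exact hdk

lemma pb_injective {u v : R3} (h : pb φ u = pb φ v) : u = v := by
  have h0 := hd.1
  have := pb_eq_zero hd (g := u - v) (by rw [pb_sub h0, h, sub_self])
  exact sub_eq_zero.mp this

end Inj2

lemma pd_onlyx {b : R3} (hb : OnlyX b) {j : Fin 3} (hj : j ≠ 0) : pd j b = 0 := by
  apply ext3; intro m
  rw [cf_pd]
  have hz : cf (m + Finsupp.single j 1) b = 0 := by
    apply hb
    fin_cases j
    · exact absurd rfl hj
    · left; simp
    · right; simp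
  rw [hz, mul_zero]
  simp [cf_def]

lemma pb_onlyx {φ : Fin 3 → R3} (h0 : ∀ i, MvPowerSeries.constantCoeff (σ := Fin 3) (R := ℂ) (φ i) = 0)
    (hfib : φ 0 = Xv 0) {b : R3} (hb : OnlyX b) : pb φ b = b := by
  apply ext3; intro k
  have hform : cf k (pb φ b) = ∑' m, cf m b * cf k (cP φ m) := rfl
  have hcP : ∀ n : ℕ, cf k (cP φ (Finsupp.single 0 n)) = if k = Finsupp.single 0 n then 1 else 0 := by
    intro n
    have : cP φ (Finsupp.single 0 n) = MvPowerSeries.X (0 : Fin 3) ^ n := by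
      rw [cP, Fin.prod_univ_three]
      simp [Finsupp.single_apply, hfib, Xv]
    rw [this, MvPowerSeries.X_pow_eq, cf_def, MvPowerSeries.coeff_monomial]
  have hpure : ∀ m : Fin 3 →₀ ℕ, m 1 = 0 → m 2 = 0 → m = Finsupp.single 0 (m 0) := by
    intro m h1 h2
    ext j
    fin_cases j <;> simp [Finsupp.single_apply, h1, h2]
  rw [hform, tsum_eq_single (Finsupp.single 0 (k 0)) ?van]
  case van =>
    intro m hm
    by_cases hxp : m 1 = 0 ∧ m 2 = 0
    · have hmp := hpure m hxp.1 hxp.2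
      rw [hmp, hcP, if_neg, mul_zero]
      intro hc
      apply hm
      rw [hmp]
      have : k 0 = m 0 := by rw [hc]; simp
      rw [this]
    · rw [hb m (by tauto), zero_mul]
  by_cases hk : k 1 = 0 ∧ k 2 = 0
  · have hkp := hpure k hk.1 hk.2
    rw [hcP, if_pos hkp, mul_one, ← hkp]
  · rw [hb k (by tauto), hcP, if_neg, mul_zero]
    intro hc
    have h1 := DFunLike.congr_fun hc 1
    have h2 := DFunLike.congr_fun hc 2
    simp [Finsupp.single_apply] at h1 h2
    tauto

end PfAux

open PfAux

/-- **The push-forward of a transversally Hamiltonian vector field by a transversally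
symplectic diffeomorphism is transversally Hamiltonian.** -/
theorem pushforward_trans_hamiltonian
    (φ Xc Zc : Fin 3 → R3) (hd : IsDiffeo φ) (hs : TransSymp φ)
    (hXsing : ∀ i, Xc i ∈ mI) (hZsing : ∀ i, Zc i ∈ mI)
    (hXham : TransHam Xc) (hconj : Conj φ Xc Zc) :
    TransHam Zc := by
  classical
  obtain ⟨hfib, hsymp⟩ := hs
  have h0 := hd.1
  have hVF : ∀ (b : Fin 3 → R3) (f : R3),
      VF b f = b 0 * pd 0 f + b 1 * pd 1 f + b 2 * pd 2 f :=
    fun b f => Fin.sum_univ_three _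
  have hVFX : ∀ (b : Fin 3 → R3) (j : Fin 3), VF b (Xv j) = b j := by
    intro b j
    rw [hVF]
    fin_cases j <;>
      simp [pd_X, show (0:Fin 3) ≠ 1 by decide, show (0:Fin 3) ≠ 2 by decide,
        show (1:Fin 3) ≠ 0 by decide, show (1:Fin 3) ≠ 2 by decide,
        show (2:Fin 3) ≠ 0 by decide, show (2:Fin 3) ≠ 1 by decide]
  have hpbZ : ∀ j : Fin 3, pb φ (Zc j) = VF Xc (φ j) := by
    intro j
    have h := hconj (Xv j)
    rw [hVFX Zc j, pb_X h0] at h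
    exact h
  have hz0 : pb φ (Zc 0) = Xc 0 := by
    rw [hpbZ 0, hfib, hVFX Xc 0]
  have hZ0 : Zc 0 = Xc 0 := by
    apply pb_injective hd
    rw [hz0, pb_onlyx h0 hfib hXham.1]
  refine ⟨by rw [hZ0]; exact hXham.1, RingHom.mem_ker.mp (hZsing 0), ?_⟩
  apply pb_injective hd
  rw [pb_mul h0, pb_add h0, pb_X h0, hfib, hz0]
  have hchain : ∀ (f : R3) (i : Fin 3), pd i (pb φ f) =
      pb φ (pd 0 f) * pd i (φ 0) + pb φ (pd 1 f) * pd i (φ 1)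
        + pb φ (pd 2 f) * pd i (φ 2) := by
    intro f i
    rw [pb_pd h0, Fin.sum_univ_three]
  have hpd10 : pd 1 (φ 0) = 0 := by
    rw [hfib, pd_X, if_neg (show (1:Fin 3) ≠ 0 by decide)]
  have hpd20 : pd 2 (φ 0) = 0 := by
    rw [hfib, pd_X, if_neg (show (2:Fin 3) ≠ 0 by decide)]
  have hch1 : ∀ f : R3, pd 1 (pb φ f) =
      pb φ (pd 1 f) * pd 1 (φ 1) + pb φ (pd 2 f) * pd 1 (φ 2) := by
    intro f
    rw [hchain f 1, hpd10, mul_zero, zero_add]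
  have hch2 : ∀ f : R3, pd 2 (pb φ f) =
      pb φ (pd 1 f) * pd 2 (φ 1) + pb φ (pd 2 f) * pd 2 (φ 2) := by
    intro f
    rw [hchain f 2, hpd20, mul_zero, zero_add]
  have hu1 : pb φ (pd 1 (Zc 1)) =
      pd 2 (φ 2) * pd 1 (pb φ (Zc 1)) - pd 1 (φ 2) * pd 2 (pb φ (Zc 1)) := by
    linear_combination (-(pd 2 (φ 2))) * hch1 (Zc 1) + (pd 1 (φ 2)) * hch2 (Zc 1)
      - (pb φ (pd 1 (Zc 1))) * hsymp
  have hv2 : pb φ (pd 2 (Zc 2)) =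
      pd 1 (φ 1) * pd 2 (pb φ (Zc 2)) - pd 2 (φ 1) * pd 1 (pb φ (Zc 2)) := by
    linear_combination (pd 2 (φ 1)) * hch1 (Zc 2) - (pd 1 (φ 1)) * hch2 (Zc 2)
      - (pb φ (pd 2 (Zc 2))) * hsymp
  have hS1 : pb φ (Zc 1) = Xc 0 * pd 0 (φ 1) + Xc 1 * pd 1 (φ 1) + Xc 2 * pd 2 (φ 1) := by
    rw [hpbZ 1, hVF]
  have hS2 : pb φ (Zc 2) = Xc 0 * pd 0 (φ 2) + Xc 1 * pd 1 (φ 2) + Xc 2 * pd 2 (φ 2) := by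
    rw [hpbZ 2, hVF]
  have hx1 : pd 1 (Xc 0) = 0 := pd_onlyx hXham.1 (show (1:Fin 3) ≠ 0 by decide)
  have hx2 : pd 2 (Xc 0) = 0 := pd_onlyx hXham.1 (show (2:Fin 3) ≠ 0 by decide)
  have hham : Xv 0 * (pd 1 (Xc 1) + pd 2 (Xc 2)) = Xc 0 := hXham.2.2
  have g0 := congrArg (pd 0) hsymp
  have g1 := congrArg (pd 1) hsymp
  have g2 := congrArg (pd 2) hsymp
  rw [pd_sub, pd_mul, pd_mul, pd_one] at g0 g1 g2
  rw [hu1, hv2, hS1, hS2]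
  simp only [pd_add, pd_mul, hx1, hx2, zero_mul, zero_add, add_zero]
  simp only [pd_comm 1 0, pd_comm 2 0, pd_comm 2 1] at g0 g1 g2 ⊢
  linear_combination hham + (Xv 0 * Xc 0) * g0 + (Xv 0 * Xc 1) * g1 + (Xv 0 * Xc 2) * g2
    + (Xv 0 * (pd 1 (Xc 1) + pd 2 (Xc 2))) * hsymp

end
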